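/- Adopt the directional pattern setup and assume Condition (C). For an integer L_0 with 1 ≤ L_0 ≤ L−1, define Ḡ(φ, L_0) = (1/L_0)·Σ_{l=0}^{L_0−1} G_l(φ) + (1/(L−L_0))·Σ_{l=L_0}^{L−1} G_l(φ), and define I_0(L_0) = [−2π/L + φ_B, L_0·2π/L − φ_B]. Then for every integer L_0 with L/2 < L_0 ≤ L−1: inf_{φ ∈ [0, 2π)} Ḡ(φ, L_0) = inf_{φ ∈ I_0(L_0)} Ḡ(φ, L_0). -/

import Mathlib

set_option maxHeartbeats 1000000

private lemma swAdd (f : ℤ → ℝ) (s : ℤ) (p q : ℕ) :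
    ∑ i ∈ Finset.range (p + q), f (s + i) =
      (∑ i ∈ Finset.range p, f (s + i)) + ∑ i ∈ Finset.range q, f (s + p + i) := by
  induction q with
  | zero => simp
  | succ q ih =>
      rw [Nat.add_succ, Finset.sum_range_succ, Finset.sum_range_succ, ih]
      have h1 : s + ((p + q : ℕ) : ℤ) = s + (p : ℤ) + (q : ℤ) := by push_cast; ring
      rw [h1, add_assoc]

private lemma swLe (f : ℤ → ℝ) (g : ℝ) (s : ℤ) (cnt : ℕ)
    (hb : ∀ j : ℤ, s ≤ j → j < s + cnt → f j ≤ g) :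
    ∑ i ∈ Finset.range cnt, f (s + i) ≤ cnt * g := by
  calc ∑ i ∈ Finset.range cnt, f (s + i) ≤ ∑ _i ∈ Finset.range cnt, g := by
        refine Finset.sum_le_sum fun i hi => hb _ (by simp) ?_
        have h2 : (i : ℤ) < (cnt : ℤ) := by exact_mod_cast Finset.mem_range.1 hi
        omega
    _ = cnt * g := by rw [Finset.sum_const, Finset.card_range, nsmul_eq_mul]

private lemma swGe (f : ℤ → ℝ) (g : ℝ) (s : ℤ) (cnt : ℕ)
    (hb : ∀ j : ℤ, s ≤ j → j < s + cnt → g ≤ f j) :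
    cnt * g ≤ ∑ i ∈ Finset.range cnt, f (s + i) := by
  calc (cnt : ℝ) * g = ∑ _i ∈ Finset.range cnt, g := by
        rw [Finset.sum_const, Finset.card_range, nsmul_eq_mul]
    _ ≤ ∑ i ∈ Finset.range cnt, f (s + i) := by
        refine Finset.sum_le_sum fun i hi => hb _ (by simp) ?_
        have h2 : (i : ℤ) < (cnt : ℤ) := by exact_mod_cast Finset.mem_range.1 hi
        omega

/-- Appendix Lemma 7: under Condition (C), for every group size
`L_0` with `L/2 < L_0 ≤ L−1`, the infimum over `[0,2π)` of the equivalent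
pattern `Ḡ(·, L_0)` is attained on the all-sidelobe region `I_0(L_0)`. -/
theorem stmt15
(L : ℕ) (hL : 2 ≤ L)
    (G : ℝ → ℝ) (hGnn : ∀ φ, 0 ≤ G φ)
    (hGper : ∀ φ, G (φ + 2 * Real.pi) = G φ)
    (GSL φB : ℝ) (hGSL : 0 ≤ GSL)
    (hφB0 : 0 < φB) (hφBhalf : φB < Real.pi / 2)
    (hmain : ∀ φ ∈ Set.Ioo (-φB) φB, GSL < G φ)
    (hside : ∀ φ : ℝ, φB ≤ |φ| → |φ| ≤ Real.pi → G φ ≤ GSL)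
    (Gl : ℕ → ℝ → ℝ)
    (hGl : ∀ l φ, Gl l φ = G (φ - l * (2 * Real.pi) / L))
-- Condition (C)
    (hC : GSL < ((L / 2 : ℕ) : ℝ) / (((L + 1) / 2 : ℕ) : ℝ) *
      sInf ((fun φ => (1 / ((L : ℝ) - 1)) * ∑ l ∈ Finset.range (L - 1), Gl l φ) ''
        Set.Icc (φB - 2 * Real.pi / L) (((L : ℝ) - 1) * (2 * Real.pi) / L - φB)))
(Gbar : ℕ → ℝ → ℝ)
    (hGbar : ∀ L0 φ, Gbar L0 φ =
      (1 / (L0 : ℝ)) * ∑ l ∈ Finset.range L0, Gl l φ +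
      (1 / ((L : ℝ) - L0)) * ∑ l ∈ Finset.Ico L0 L, Gl l φ) :
    ∀ L0 : ℕ, (L : ℝ) / 2 < (L0 : ℝ) → L0 ≤ L - 1 →
      sInf (Gbar L0 '' Set.Ico (0:ℝ) (2 * Real.pi)) =
      sInf (Gbar L0 ''
        Set.Icc (-(2 * Real.pi) / L + φB) ((L0 : ℝ) * (2 * Real.pi) / L - φB)) := by
  intro L0 hhalf hle
  have hπ := Real.pi_pos
  have hLR : (0:ℝ) < L := by positivity
  set c : ℝ := 2 * Real.pi / L with hc
  have hcpos : 0 < c := by positivity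
  have hLc : (L : ℝ) * c = 2 * Real.pi := by rw [hc]; field_simp
  have hL3 : 3 ≤ L := by
    rcases Nat.lt_or_ge L 3 with h3 | h3
    · exfalso
      have hL2 : L = 2 := by omega
      subst hL2
      have : L0 ≤ 1 := by omega
      have h1 : (L0 : ℝ) ≤ 1 := by exact_mod_cast this
      norm_num at hhalf
      linarith
    · exact h3
  have hL0pos : 0 < L0 := by
    have h0 : (0:ℝ) < (L:ℝ)/2 := by positivity
    have : (0:ℝ) < (L0 : ℝ) := lt_trans h0 hhalf
    exact_mod_cast this
  set n : ℕ := L - L0 with hn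
  have hLn : L = L0 + n := by omega
  have hn1 : 1 ≤ n := by omega
  have hcastn : ((L : ℝ) - L0) = (n : ℝ) := by
    have : (L : ℝ) = (L0 : ℝ) + (n : ℝ) := by exact_mod_cast congrArg (Nat.cast (R := ℝ)) hLn
    linarith
  have hnR : (0:ℝ) < n := by exact_mod_cast hn1
  have hL0R : (0:ℝ) < L0 := by exact_mod_cast hL0pos
  have hnL0 : (n : ℝ) ≤ (L0 : ℝ) := by
    have h2 : (L:ℝ) < 2 * L0 := by linarith
    linarith [hcastn]
  have hδ : 1 / (L0 : ℝ) ≤ 1 / (n : ℝ) := one_div_le_one_div_of_le hnR hnL0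
  have hπL0c : Real.pi < (L0:ℝ) * c := by
    have h1 : (L:ℝ)/2 * c = Real.pi := by field_simp [hc]; linarith [hLc]
    nlinarith [mul_lt_mul_of_pos_right hhalf hcpos]
  have h2φB : 2 * φB < Real.pi := by linarith
  have hφBL0c : 2 * φB < (L0:ℝ) * c := by linarith
  have hL1c : ((L:ℝ) - 1) * c = 2 * Real.pi - c := by
    have : ((L:ℝ) - 1) * c = (L:ℝ)*c - c := by ring
    rw [this, hLc]
  have hL0L1 : (L0 : ℝ) ≤ (L:ℝ) - 1 := by
    have h1 : L0 ≤ L - 1 := hle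
    have h2 : (L0:ℝ) ≤ ((L-1 : ℕ):ℝ) := by exact_mod_cast h1
    have h3 : ((L-1:ℕ):ℝ) = (L:ℝ) - 1 := by
      have : 1 ≤ L := by omega
      push_cast [this]; ring
    linarith
  have hGsub : ∀ x, G (x - 2 * Real.pi) = G x := by
    intro x
    have h1 := hGper (x - 2 * Real.pi)
    rw [sub_add_cancel] at h1
    exact h1.symm
  have hSL : ∀ y : ℝ, φB ≤ y → y ≤ 2 * Real.pi - φB → G y ≤ GSL := by
    intro y h1 h2
    rcases le_or_gt y Real.pi with hy | hy
    · exact hside y (by rw [abs_of_nonneg (by linarith)]; exact h1)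
        (by rw [abs_of_nonneg (by linarith)]; exact hy)
    · rw [← hGsub y]
      refine hside (y - 2*Real.pi) ?_ ?_
      · rw [abs_of_nonpos (by linarith)]; linarith
      · rw [abs_of_nonpos (by linarith)]; linarith
  have hGlc : ∀ (l : ℕ) (x : ℝ), Gl l x = G (x - l * c) := by
    intro l x
    rw [hGl]
    congr 1
    rw [hc]
    ring
  -- the constant A
  set A : ℝ := sInf ((fun φ => (1 / ((L : ℝ) - 1)) * ∑ l ∈ Finset.range (L - 1), Gl l φ) ''
        Set.Icc (φB - 2 * Real.pi / L) (((L : ℝ) - 1) * (2 * Real.pi) / L - φB)) with hA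
  have hL1R : (0:ℝ) < (L:ℝ) - 1 := by
    have : (1:ℝ) < L := by exact_mod_cast (by omega : 1 < L)
    linarith
  have hGlnn : ∀ (l : ℕ) (x : ℝ), 0 ≤ Gl l x := by
    intro l x; rw [hGl]; exact hGnn _
  have hAnn : 0 ≤ A := by
    apply Real.sInf_nonneg
    rintro x ⟨φ, _, rfl⟩
    have h1 : 0 ≤ ∑ l ∈ Finset.range (L - 1), Gl l φ :=
      Finset.sum_nonneg fun l _ => hGlnn l φ
    positivity
  have hgA : GSL < A := by
    have hratio : ((L / 2 : ℕ) : ℝ) / (((L + 1) / 2 : ℕ) : ℝ) ≤ 1 := by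
      have h1 : (L / 2 : ℕ) ≤ ((L + 1) / 2 : ℕ) := by omega
      have h2 : (0:ℝ) < (((L + 1) / 2 : ℕ) : ℝ) := by
        have h3 : 0 < ((L+1)/2 : ℕ) := by omega
        exact_mod_cast h3
      rw [div_le_one h2]
      exact_mod_cast h1
    calc GSL < ((L / 2 : ℕ) : ℝ) / (((L + 1) / 2 : ℕ) : ℝ) * A := hC
      _ ≤ 1 * A := mul_le_mul_of_nonneg_right hratio hAnn
      _ = A := one_mul A
  have hApt : ∀ x : ℝ, φB - c ≤ x → x ≤ ((L:ℝ) - 1) * c - φB →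
      ((L : ℝ) - 1) * A ≤ ∑ l ∈ Finset.range (L - 1), Gl l x := by
    intro x hx1 hx2
    have hmem : x ∈ Set.Icc (φB - 2 * Real.pi / L) (((L : ℝ) - 1) * (2 * Real.pi) / L - φB) := by
      constructor
      · have he : φB - 2 * Real.pi / L = φB - c := by rw [hc]
        linarith [he]
      · have he : ((L : ℝ) - 1) * (2 * Real.pi) / L = ((L:ℝ) - 1) * c := by rw [hc]; ring
        linarith [he]
    have hbdd : BddBelow ((fun φ => (1 / ((L : ℝ) - 1)) * ∑ l ∈ Finset.range (L - 1), Gl l φ) ''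
        Set.Icc (φB - 2 * Real.pi / L) (((L : ℝ) - 1) * (2 * Real.pi) / L - φB)) := by
      refine ⟨0, ?_⟩
      rintro y ⟨φ, _, rfl⟩
      have h1 : 0 ≤ ∑ l ∈ Finset.range (L - 1), Gl l φ :=
        Finset.sum_nonneg fun l _ => hGlnn l φ
      positivity
    have hle' : A ≤ (1 / ((L : ℝ) - 1)) * ∑ l ∈ Finset.range (L - 1), Gl l x :=
      csInf_le hbdd (Set.mem_image_of_mem _ hmem)
    have h5 := mul_le_mul_of_nonneg_left hle' (le_of_lt hL1R)
    calc ((L : ℝ) - 1) * A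
        ≤ ((L:ℝ)-1) * ((1 / ((L : ℝ) - 1)) * ∑ l ∈ Finset.range (L - 1), Gl l x) := h5
      _ = ∑ l ∈ Finset.range (L - 1), Gl l x := by field_simp
  have hGbarPer : ∀ x : ℝ, Gbar L0 (x + 2 * Real.pi) = Gbar L0 x := by
    intro x
    rw [hGbar, hGbar]
    congr 1
    · congr 1
      refine Finset.sum_congr rfl fun l _ => ?_
      rw [hGlc, hGlc]
      have he : x + 2*Real.pi - l * c = (x - l*c) + 2*Real.pi := by ring
      rw [he, hGper]
    · congr 1
      refine Finset.sum_congr rfl fun l _ => ?_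
      rw [hGlc, hGlc]
      have he : x + 2*Real.pi - l * c = (x - l*c) + 2*Real.pi := by ring
      rw [he, hGper]
  have hGbarNN : ∀ x : ℝ, 0 ≤ Gbar L0 x := by
    intro x
    rw [hGbar]
    have h1 : 0 ≤ ∑ l ∈ Finset.range L0, Gl l x := Finset.sum_nonneg fun l _ => hGlnn l x
    have h2 : 0 ≤ ∑ l ∈ Finset.Ico L0 L, Gl l x := Finset.sum_nonneg fun l _ => hGlnn l x
    have h3 : 0 ≤ 1 / ((L:ℝ) - L0) := by rw [hcastn]; positivity
    have h4 : 0 ≤ 1 / (L0:ℝ) := by positivity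
    nlinarith
  -- CORE
  have core : ∀ χ : ℝ, (L0:ℝ) * c - φB < χ → χ < ((L:ℝ) - 1) * c + φB →
      ∃ ψ ∈ Set.Icc (φB - c) ((L0:ℝ) * c - φB), Gbar L0 ψ ≤ Gbar L0 χ := by
    intro χ hχ1 hχ2
    set h : ℤ → ℝ := fun j => G (χ - (j : ℝ) * c) with hh
    set SW : ℤ → ℕ → ℝ := fun s cnt => ∑ i ∈ Finset.range cnt, h (s + (i:ℤ)) with hSW
    have hper : ∀ j : ℤ, h (j - L) = h j := by
      intro j
      show G (χ - ((j - (L:ℤ) : ℤ) : ℝ) * c) = G (χ - (j:ℝ) * c)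
      have harg : χ - ((j - (L:ℤ) : ℤ) : ℝ) * c = (χ - (j:ℝ)*c) + (L:ℝ)*c := by push_cast; ring
      rw [harg, hLc, hGper]
    have swAdd' : ∀ (s : ℤ) (p q : ℕ), SW s (p + q) = SW s p + SW (s + p) q :=
      fun s p q => swAdd h s p q
    have swPer : ∀ (s : ℤ) (cnt : ℕ), SW (s - L) cnt = SW s cnt := by
      intro s cnt
      refine Finset.sum_congr rfl fun i _ => ?_
      have he : s - (L:ℤ) + (i:ℤ) = (s + i) - L := by ring
      rw [he, hper]
    have swStep : ∀ k : ℤ, SW (k + 1) L = SW k L := by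
      intro k
      have e1 : L = 1 + (L - 1) := by omega
      have d1 : SW k L = SW k 1 + SW (k + 1) (L - 1) := by
        conv_lhs => rw [e1]
        have h1 := swAdd' k 1 (L-1)
        simpa using h1
      have e2 : L = (L - 1) + 1 := by omega
      have d2 : SW (k+1) L = SW (k+1) (L-1) + SW (k + 1 + ((L-1:ℕ):ℤ)) 1 := by
        conv_lhs => rw [e2]
        exact swAdd' (k+1) (L-1) 1
      have e3 : SW k 1 = h k := by simp [hSW]
      have e4 : SW (k + 1 + ((L-1:ℕ):ℤ)) 1 = h (k + L) := by
        have he : k + 1 + ((L-1:ℕ):ℤ) = k + L := by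
          have h1 : ((L-1:ℕ):ℤ) = (L:ℤ) - 1 := by omega
          omega
        simp [hSW, he]
      have e5 : h (k + L) = h k := by
        have h1 := hper (k + L)
        rw [add_sub_cancel_right] at h1
        exact h1.symm
      rw [d1, d2, e3, e4, e5]; ring
    have swInv : ∀ k : ℤ, SW k L = SW 0 L := by
      intro k
      induction k using Int.induction_on with
      | zero => rfl
      | succ i ih => rw [swStep i, ih]
      | pred i ih =>
          have h1 := swStep (-(i:ℤ) - 1)
          rw [show -(i:ℤ) - 1 + 1 = -(i:ℤ) by ring] at h1
          rw [h1] at ih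
          exact ih
    have hGbarShift : ∀ k : ℤ, Gbar L0 (χ - (k:ℝ) * c) =
        (1 / (L0:ℝ)) * SW k L0 + (1 / (n:ℝ)) * SW (k + L0) n := by
      intro k
      rw [hGbar, hcastn]
      congr 1
      · congr 1
        refine Finset.sum_congr rfl fun l _ => ?_
        rw [hGlc]
        show G (χ - (k:ℝ)*c - (l:ℕ) * c) = h (k + (l:ℤ))
        have he : χ - (k:ℝ)*c - (l:ℕ) * c = χ - ((k + (l:ℤ) : ℤ):ℝ) * c := by push_cast; ring
        rw [he]
      · congr 1
        rw [Finset.sum_Ico_eq_sum_range]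
        have hnn : L - L0 = n := rfl
        rw [hnn]
        refine Finset.sum_congr rfl fun i _ => ?_
        rw [hGlc]
        show G (χ - (k:ℝ)*c - ((L0 + i : ℕ):ℝ) * c) = h (k + (L0:ℤ) + (i:ℤ))
        have he : χ - (k:ℝ)*c - ((L0 + i : ℕ):ℝ) * c
            = χ - ((k + (L0:ℤ) + (i:ℤ) : ℤ):ℝ) * c := by push_cast; ring
        rw [he]
    have hGbar0 : Gbar L0 χ = (1 / (L0:ℝ)) * SW 0 L0 + (1 / (n:ℝ)) * SW ((L0:ℤ)) n := by
      have h1 := hGbarShift 0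
      simpa using h1
    have cmpW : ∀ k : ℤ, SW (k + L0) n ≤ SW (L0:ℤ) n →
        Gbar L0 (χ - (k:ℝ) * c) ≤ Gbar L0 χ := by
      intro k hW
      have einv : SW k L0 + SW (k + L0) n = SW 0 L0 + SW (L0:ℤ) n := by
        have t1 : SW k L = SW k L0 + SW (k + L0) n := by
          conv_lhs => rw [hLn]
          exact swAdd' k L0 n
        have t2 : SW 0 L = SW 0 L0 + SW (L0:ℤ) n := by
          conv_lhs => rw [hLn]
          have h1 := swAdd' 0 L0 n
          simpa using h1
        rw [← t1, ← t2, swInv k]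
      have e1 : SW k L0 = SW 0 L0 + SW (L0:ℤ) n - SW (k + L0) n := by linarith [einv]
      rw [hGbarShift k, hGbar0, e1]
      have hprod : 0 ≤ (1/(n:ℝ) - 1/(L0:ℝ)) * (SW (L0:ℤ) n - SW (k + L0) n) :=
        mul_nonneg (by linarith) (by linarith)
      nlinarith [hprod]
    -- define a and b
    set a : ℤ := ⌊(χ - φB) / c⌋ + 1 with ha
    set b : ℤ := ⌈(χ + φB) / c⌉ - 1 with hb
    have ha2 : χ - (a:ℝ) * c < φB := by
      have h1 := Int.lt_floor_add_one ((χ - φB) / c)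
      have h2 : (χ - φB) / c < (a:ℝ) := by push_cast [ha]; linarith
      have h3 := (div_lt_iff₀ hcpos).1 h2
      linarith
    have ha1 : φB - c ≤ χ - (a:ℝ) * c := by
      have hfl := Int.floor_le ((χ - φB) / c)
      have h2 : ((a:ℝ) - 1) ≤ (χ - φB) / c := by push_cast [ha]; linarith
      have h3 := (le_div_iff₀ hcpos).1 h2
      have h4 : ((a:ℝ)-1)*c = (a:ℝ)*c - c := by ring
      linarith
    have hb1 : -φB < χ - (b:ℝ) * c := by
      have h1 := Int.ceil_lt_add_one ((χ + φB) / c)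
      have h2 : (b:ℝ) < (χ + φB) / c := by push_cast [hb]; linarith
      have h3 := (lt_div_iff₀ hcpos).1 h2
      linarith
    have hbc : χ + φB ≤ ((b:ℝ) + 1) * c := by
      have h1 := Int.le_ceil ((χ + φB) / c)
      have h2 : (χ + φB) / c ≤ (b:ℝ) + 1 := by push_cast [hb]; linarith
      have h3 := (div_le_iff₀ hcpos).1 h2
      linarith
    have haL : a ≤ (L:ℤ) - 1 := by
      have h4 : (a:ℝ) - 1 < (L:ℝ) - 1 := by
        by_contra hcon
        push_neg at hcon
        have h1 : ((a:ℝ) - 1) * c ≤ χ - φB := by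
          have hfl := Int.floor_le ((χ - φB) / c)
          have h2 : ((a:ℝ) - 1) ≤ (χ - φB) / c := by push_cast [ha]; linarith
          exact (le_div_iff₀ hcpos).1 h2
        have h5 : ((L:ℝ) - 1) * c ≤ ((a:ℝ) - 1) * c :=
          mul_le_mul_of_nonneg_right hcon hcpos.le
        linarith
      have h5 : (a:ℝ) < (L:ℝ) := by linarith
      have h6 : a < (L:ℤ) := by exact_mod_cast h5
      omega
    have hbL0 : (L0:ℤ) ≤ b := by
      have h1 : (L0:ℝ)*c < χ + φB := by linarith
      have h2 : (L0:ℝ) * c < ((b:ℝ)+1)*c := by linarith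
      have h3 : (L0:ℝ) < (b:ℝ)+1 := lt_of_mul_lt_mul_right h2 (le_of_lt hcpos)
      have h4 : (L0:ℤ) < b+1 := by exact_mod_cast h3
      omega
    have hab : a ≤ b + 1 := by
      have h1 : ((a:ℝ) - 1) * c ≤ χ - φB := by
        have hfl := Int.floor_le ((χ - φB) / c)
        have h2 : ((a:ℝ) - 1) ≤ (χ - φB) / c := by push_cast [ha]; linarith
        exact (le_div_iff₀ hcpos).1 h2
      have h3 : ((a:ℝ) - 1) * c < ((b:ℝ)+1)*c := by linarith
      have h4 : (a:ℝ) - 1 < (b:ℝ)+1 := lt_of_mul_lt_mul_right h3 (le_of_lt hcpos)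
      have h5 : a - 1 < b + 1 := by exact_mod_cast h4
      omega
    have hba : b - a ≤ (L0:ℤ) - 1 := by
      have h1 : (b:ℝ)*c < χ + φB := by linarith
      have h2 : χ - φB < (a:ℝ)*c := by linarith
      have h3 : ((b:ℝ) - a)*c < 2*φB := by
        have he : ((b:ℝ) - a)*c = (b:ℝ)*c - (a:ℝ)*c := by ring
        linarith
      have h4 : ((b:ℝ) - a)*c < (L0:ℝ)*c := by linarith
      have h5 : (b:ℝ) - a < (L0:ℝ) := lt_of_mul_lt_mul_right h4 (le_of_lt hcpos)
      have h6 : b - a < (L0:ℤ) := by exact_mod_cast h5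
      omega
    have hoff : ∀ j : ℤ, b + 1 - L ≤ j → j ≤ a - 1 → h j ≤ GSL := by
      intro j hj1 hj2
      apply hSL
      · have h1 : (j:ℝ) ≤ (a:ℝ) - 1 := by
          have : (j:ℝ) ≤ ((a - 1 : ℤ):ℝ) := by exact_mod_cast hj2
          push_cast at this; linarith
        have h2 : (j:ℝ)*c ≤ ((a:ℝ)-1)*c := mul_le_mul_of_nonneg_right h1 hcpos.le
        have h3 : ((a:ℝ)-1)*c = (a:ℝ)*c - c := by ring
        linarith
      · have h1 : ((b:ℝ) + 1 - L) ≤ (j:ℝ) := by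
          have : ((b + 1 - (L:ℤ) : ℤ):ℝ) ≤ (j:ℝ) := by exact_mod_cast hj1
          push_cast at this; linarith
        have h2 : ((b:ℝ)+1-L)*c ≤ (j:ℝ)*c := mul_le_mul_of_nonneg_right h1 hcpos.le
        have h3 : ((b:ℝ)+1)*c - 2*Real.pi ≤ (j:ℝ)*c := by
          have : ((b:ℝ)+1-L)*c = ((b:ℝ)+1)*c - (L:ℝ)*c := by ring
          rw [this, hLc] at h2
          linarith
        linarith
    have hMg : ∀ j : ℤ, a ≤ j → j ≤ b → GSL ≤ h j := by
      intro j hj1 hj2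
      apply le_of_lt
      apply hmain
      constructor
      · have h1 : (j:ℝ) ≤ (b:ℝ) := by exact_mod_cast hj2
        have h2 : (j:ℝ)*c ≤ (b:ℝ)*c := mul_le_mul_of_nonneg_right h1 hcpos.le
        linarith
      · have h1 : (a:ℝ) ≤ (j:ℝ) := by exact_mod_cast hj1
        have h2 : (a:ℝ)*c ≤ (j:ℝ)*c := mul_le_mul_of_nonneg_right h1 hcpos.le
        linarith
    have swLe' : ∀ (s:ℤ) (cnt:ℕ), (∀ j:ℤ, s ≤ j → j < s + cnt → h j ≤ GSL) →
        SW s cnt ≤ cnt*GSL := fun s cnt hb' => swLe h GSL s cnt hb'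
    have swGe' : ∀ (s:ℤ) (cnt:ℕ), (∀ j:ℤ, s ≤ j → j < s + cnt → GSL ≤ h j) →
        (cnt:ℝ)*GSL ≤ SW s cnt := fun s cnt hb' => swGe h GSL s cnt hb'
    have hK : b ≤ (L:ℤ) - 2 → ((L:ℝ)-1) * A ≤ SW 1 (L-1) := by
      intro hbL2
      have hbR : (b:ℝ) ≤ (L:ℝ) - 2 := by
        have : (b:ℤ) ≤ ((L:ℤ) - 2) := hbL2
        have h2 : (b:ℝ) ≤ (((L:ℤ) - 2 : ℤ):ℝ) := by exact_mod_cast this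
        push_cast at h2; linarith
      have hx1 : φB - c ≤ χ - c := by linarith
      have hx2 : χ - c ≤ ((L:ℝ)-1)*c - φB := by
        have h1 : χ + φB ≤ ((b:ℝ)+1)*c := hbc
        have h2 : ((b:ℝ)+1)*c ≤ ((L:ℝ)-1)*c :=
          mul_le_mul_of_nonneg_right (by linarith) hcpos.le
        linarith
      have h3 := hApt (χ - c) hx1 hx2
      have h4 : ∑ l ∈ Finset.range (L-1), Gl l (χ - c) = SW 1 (L-1) := by
        refine Finset.sum_congr rfl fun l _ => ?_
        rw [hGlc]
        show G (χ - c - (l:ℕ)*c) = h (1 + (l:ℤ))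
        have he : χ - c - (l:ℕ)*c = χ - ((1 + (l:ℤ) : ℤ):ℝ)*c := by push_cast; ring
        rw [he]
      rw [← h4]
      exact h3
    -- the right-shift candidate ψR is always in I₀
    have hψRmem : χ - ((b + 1 - (L0:ℤ) : ℤ):ℝ)*c ∈ Set.Icc (φB - c) ((L0:ℝ) * c - φB) := by
      constructor
      · have he : χ - ((b + 1 - (L0:ℤ) : ℤ):ℝ)*c = (χ - ((b:ℝ)+1)*c) + (L0:ℝ)*c := by
          push_cast; ring
        rw [he]
        have h1 : χ - ((b:ℝ)+1)*c = (χ - (b:ℝ)*c) - c := by ring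
        linarith [hb1, hφBL0c]
      · have he : χ - ((b + 1 - (L0:ℤ) : ℤ):ℝ)*c = (χ - ((b:ℝ)+1)*c) + (L0:ℝ)*c := by
          push_cast; ring
        rw [he]
        linarith [hbc]
    have hψLmem : χ - (a:ℝ)*c ∈ Set.Icc (φB - c) ((L0:ℝ) * c - φB) := by
      exact ⟨ha1, by linarith [ha2, hφBL0c]⟩
    -- window bounds shared by several cases
    have hWLP : ∀ (P : ℕ), (P:ℤ) ≤ b + 1 - L0 → b ≤ (L:ℤ) - 1 → SW ((L:ℤ)) P ≤ P*GSL := by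
      intro P hP hbl1
      apply swLe'
      intro j hj1 hj2
      rw [← hper j]
      apply hoff
      · omega
      · have : j < (L:ℤ) + P := hj2
        omega
    have hWaQLle : ∀ (QL : ℕ), (QL:ℤ) ≤ (L:ℤ) - a → (L0:ℤ) < a → SW (a - (n:ℤ)) QL ≤ QL*GSL := by
      intro QL hQL hL0a
      apply swLe'
      intro j hj1 hj2
      apply hoff
      · have hnc : (n:ℤ) = (L:ℤ) - L0 := by omega
        omega
      · have : j < a - (n:ℤ) + QL := hj2
        have hnc : (n:ℤ) = (L:ℤ) - L0 := by omega
        omega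
    -- Case split
    rcases le_or_gt a (L0:ℤ) with hcaseR | hcaseL0
    · -- CASE R : right-shift works
      refine ⟨χ - ((b + 1 - (L0:ℤ) : ℤ):ℝ)*c, hψRmem, ?_⟩
      apply cmpW
      have hstart : b + 1 - (L0:ℤ) + L0 = b + 1 := by ring
      rw [hstart]
      rcases le_or_gt ((L:ℤ)-1) b with hbBig | hbSmall
      · have h1 : (n:ℝ)*GSL ≤ SW (L0:ℤ) n := by
          apply swGe'
          intro j hj1 hj2
          apply hMg j (le_trans hcaseR hj1)
          have : j < (L0:ℤ) + n := hj2
          have hnc : (n:ℤ) = (L:ℤ) - L0 := by omega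
          omega
        have h2 : SW ((b+1):ℤ) n ≤ n*GSL := by
          apply swLe'
          intro j hj1 hj2
          rw [← hper j]
          apply hoff
          · omega
          · have : j < b + 1 + n := hj2
            have hnc : (n:ℤ) = (L:ℤ) - L0 := by omega
            omega
        linarith
      · set P : ℕ := (b+1-(L0:ℤ)).toNat with hP
        set Q : ℕ := ((L:ℤ)-1-b).toNat with hQ
        have hPc : (P:ℤ) = b+1-(L0:ℤ) := Int.toNat_of_nonneg (by omega)
        have hQc : (Q:ℤ) = (L:ℤ)-1-b := Int.toNat_of_nonneg (by omega)
        have hPQ : P + Q = n := by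
          have hnc : (n:ℤ) = (L:ℤ) - L0 := by omega
          omega
        have split1 : SW (L0:ℤ) n = SW (L0:ℤ) P + SW ((b+1):ℤ) Q := by
          rw [← hPQ, swAdd' (L0:ℤ) P Q]
          congr 2
          omega
        have split2 : SW ((b+1):ℤ) n = SW ((b+1):ℤ) Q + SW ((L:ℤ)) P := by
          have hQP : n = Q + P := by omega
          rw [hQP, swAdd' ((b+1):ℤ) Q P]
          congr 2
          omega
        have hW0P : (P:ℝ)*GSL ≤ SW (L0:ℤ) P := by
          apply swGe'
          intro j hj1 hj2
          apply hMg j (le_trans hcaseR hj1)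
          have : j < (L0:ℤ) + P := hj2
          omega
        have hWLP' : SW ((L:ℤ)) P ≤ P*GSL := hWLP P (by omega) (by omega)
        linarith
    · rcases le_or_gt ((L:ℤ)-1) b with hcaseLb | hMida
      · -- CASE L : left-shift works
        refine ⟨χ - (a:ℝ)*c, hψLmem, ?_⟩
        apply cmpW
        have hshift : SW (a + L0) n = SW (a - (n:ℤ)) n := by
          have he : a - (n:ℤ) = (a + L0) - L := by
            have hnc : (n:ℤ) = (L:ℤ) - L0 := by omega
            omega
          rw [he, swPer]
        rw [hshift]
        set A1 : ℕ := (a-(L0:ℤ)).toNat with hA1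
        set QL : ℕ := ((L:ℤ)-a).toNat with hQL
        have hA1c : (A1:ℤ) = a-(L0:ℤ) := Int.toNat_of_nonneg (by omega)
        have hQLc : (QL:ℤ) = (L:ℤ)-a := Int.toNat_of_nonneg (by omega)
        have hA1QL : A1 + QL = n := by
          have hnc : (n:ℤ) = (L:ℤ) - L0 := by omega
          omega
        have split1 : SW (L0:ℤ) n = SW (L0:ℤ) A1 + SW a QL := by
          rw [← hA1QL, swAdd' (L0:ℤ) A1 QL]
          congr 2
          omega
        have split2 : SW (a - (n:ℤ)) n = SW (a - (n:ℤ)) QL + SW (L0:ℤ) A1 := by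
          have hs := swAdd' (a - (n:ℤ)) QL A1
          rw [show QL + A1 = n by omega] at hs
          rw [show a - (n:ℤ) + (QL:ℤ) = (L0:ℤ) by
            have hnc : (n:ℤ) = (L:ℤ) - L0 := by omega
            omega] at hs
          exact hs
        have hge : (QL:ℝ)*GSL ≤ SW a QL := by
          apply swGe'
          intro j hj1 hj2
          apply hMg j hj1
          have : j < a + QL := hj2
          omega
        have hleq : SW (a - (n:ℤ)) QL ≤ QL*GSL := hWaQLle QL (by omega) hcaseL0
        linarith
      · -- CASE MID
        by_cases hcmp : SW ((b+1):ℤ) n ≤ SW (L0:ℤ) n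
        · refine ⟨χ - ((b + 1 - (L0:ℤ) : ℤ):ℝ)*c, hψRmem, ?_⟩
          apply cmpW
          have hstart : b + 1 - (L0:ℤ) + L0 = b + 1 := by ring
          rw [hstart]
          exact hcmp
        · by_cases hcmp2 : SW (a - (n:ℤ)) n ≤ SW (L0:ℤ) n
          · refine ⟨χ - (a:ℝ)*c, hψLmem, ?_⟩
            apply cmpW
            have hshift : SW (a + L0) n = SW (a - (n:ℤ)) n := by
              have he : a - (n:ℤ) = (a + L0) - L := by
                have hnc : (n:ℤ) = (L:ℤ) - L0 := by omega
                omega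
              rw [he, swPer]
            rw [hshift]
            exact hcmp2
          · exfalso
            push_neg at hcmp hcmp2
            set P : ℕ := (b+1-(L0:ℤ)).toNat with hP
            set Q : ℕ := ((L:ℤ)-1-b).toNat with hQ
            set A1 : ℕ := (a-(L0:ℤ)).toNat with hA1
            set QL : ℕ := ((L:ℤ)-a).toNat with hQL
            set Mm : ℕ := (b+1-a).toNat with hMm
            have hPc : (P:ℤ) = b+1-(L0:ℤ) := Int.toNat_of_nonneg (by omega)
            have hQc : (Q:ℤ) = (L:ℤ)-1-b := Int.toNat_of_nonneg (by omega)
            have hA1c : (A1:ℤ) = a-(L0:ℤ) := Int.toNat_of_nonneg (by omega)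
            have hQLc : (QL:ℤ) = (L:ℤ)-a := Int.toNat_of_nonneg (by omega)
            have hMmc : (Mm:ℤ) = b+1-a := Int.toNat_of_nonneg (by omega)
            have hnc : (n:ℤ) = (L:ℤ) - L0 := by omega
            -- splits (right)
            have split_r1 : SW (L0:ℤ) n = SW (L0:ℤ) P + SW ((b+1):ℤ) Q := by
              have hPQ : n = P + Q := by omega
              rw [hPQ, swAdd' (L0:ℤ) P Q]
              congr 2
              omega
            have split_r2 : SW ((b+1):ℤ) n = SW ((b+1):ℤ) Q + SW ((L:ℤ)) P := by
              have hQP : n = Q + P := by omega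
              rw [hQP, swAdd' ((b+1):ℤ) Q P]
              congr 2
              omega
            have hr : SW (L0:ℤ) P < SW ((L:ℤ)) P := by linarith
            -- splits (left)
            have split_l1 : SW (L0:ℤ) n = SW (L0:ℤ) A1 + SW a QL := by
              have hAQ : n = A1 + QL := by omega
              rw [hAQ, swAdd' (L0:ℤ) A1 QL]
              congr 2
              omega
            have split_l2 : SW (a - (n:ℤ)) n = SW (a - (n:ℤ)) QL + SW (L0:ℤ) A1 := by
              have hs := swAdd' (a - (n:ℤ)) QL A1
              rw [show QL + A1 = n by omega] at hs
              rw [show a - (n:ℤ) + (QL:ℤ) = (L0:ℤ) by omega] at hs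
              exact hs
            have hl : SW a QL < SW (a - (n:ℤ)) QL := by linarith
            have hWLP' : SW ((L:ℤ)) P ≤ P*GSL := hWLP P (by omega) (by omega)
            have hWaQL' : SW (a - (n:ℤ)) QL ≤ QL*GSL := hWaQLle QL (by omega) hcaseL0
            have split_p : SW (L0:ℤ) P = SW (L0:ℤ) A1 + SW a Mm := by
              have hAM : P = A1 + Mm := by omega
              rw [hAM, swAdd' (L0:ℤ) A1 Mm]
              congr 2
              omega
            have split_q : SW a QL = SW a Mm + SW ((b+1):ℤ) Q := by
              have hMQ : QL = Mm + Q := by omega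
              rw [hMQ, swAdd' a Mm Q]
              congr 2
              omega
            have hMmge : (Mm:ℝ)*GSL ≤ SW a Mm := by
              apply swGe'
              intro j hj1 hj2
              apply hMg j hj1
              have : j < a + Mm := hj2
              omega
            have hcnt : (P:ℝ) + QL = (n:ℝ) + Mm := by
              have : (P:ℤ) + QL = (n:ℤ) + Mm := by omega
              exact_mod_cast this
            have hWn : SW (L0:ℤ) n < (n:ℝ)*GSL := by
              have key1 : SW (L0:ℤ) A1 + SW a Mm < (P:ℝ)*GSL := by
                calc SW (L0:ℤ) A1 + SW a Mm = SW (L0:ℤ) P := split_p.symm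
                  _ < SW ((L:ℤ)) P := hr
                  _ ≤ P*GSL := hWLP'
              have key2 : SW a Mm + SW ((b+1):ℤ) Q < (QL:ℝ)*GSL := by
                calc SW a Mm + SW ((b+1):ℤ) Q = SW a QL := split_q.symm
                  _ < SW (a - (n:ℤ)) QL := hl
                  _ ≤ QL*GSL := hWaQL'
              have hsum : SW (L0:ℤ) n = SW (L0:ℤ) A1 + SW a Mm + SW ((b+1):ℤ) Q := by
                rw [split_l1, split_q]
                ring
              have hcnt' : (P:ℝ)*GSL + (QL:ℝ)*GSL = (n:ℝ)*GSL + (Mm:ℝ)*GSL := by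
                rw [← add_mul, ← add_mul, hcnt]
              linarith [hMmge, hsum, key1, key2]
            have hK' := hK (by omega)
            have hupper : SW 1 (L-1) = SW 1 (L0-1) + SW (L0:ℤ) n := by
              have hcc : L - 1 = (L0 - 1) + n := by omega
              rw [hcc, swAdd' 1 (L0-1) n]
              congr 2
              omega
            have hup2 : SW 1 (L0-1) ≤ ((L0-1:ℕ):ℝ)*GSL := by
              apply swLe'
              intro j hj1 hj2
              apply hoff
              · omega
              · have : j < 1 + ((L0-1:ℕ):ℤ) := hj2
                have : ((L0-1:ℕ):ℤ) = (L0:ℤ) - 1 := by omega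
                omega
            have hfin : ((L:ℝ)-1)*A < ((L:ℝ)-1)*GSL := by
              have hc1 : ((L0-1:ℕ):ℝ) + (n:ℝ) = (L:ℝ)-1 := by
                have : ((L0-1:ℕ):ℤ) + (n:ℤ) = (L:ℤ)-1 := by omega
                exact_mod_cast this
              calc ((L:ℝ)-1)*A ≤ SW 1 (L-1) := hK'
                _ = SW 1 (L0-1) + SW (L0:ℤ) n := hupper
                _ < ((L0-1:ℕ):ℝ)*GSL + (n:ℝ)*GSL := by linarith
                _ = ((L:ℝ)-1)*GSL := by rw [← hc1]; ring
            have := mul_lt_mul_of_pos_left hgA hL1R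
            linarith
  -- KEY : every point of [0, 2π) is dominated by a point of I₀
  have key : ∀ φ : ℝ, 0 ≤ φ → φ < 2*Real.pi →
      ∃ ψ ∈ Set.Icc (φB - c) ((L0:ℝ) * c - φB), Gbar L0 ψ ≤ Gbar L0 φ := by
    intro φ h0 h2
    rcases le_or_gt φ ((L0:ℝ)*c - φB) with hA1 | hB1
    · rcases le_or_gt (φB - c) φ with hA2 | hA3
      · exact ⟨φ, ⟨hA2, hA1⟩, le_refl _⟩
      · have hc1 : (L0:ℝ)*c - φB < φ + 2*Real.pi := by
          have h3 : (L0:ℝ)*c ≤ ((L:ℝ)-1)*c := mul_le_mul_of_nonneg_right hL0L1 hcpos.le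
          rw [hL1c] at h3
          linarith
        have hc2 : φ + 2*Real.pi < ((L:ℝ)-1)*c + φB := by
          rw [hL1c]
          linarith
        obtain ⟨ψ, hmem, hle'⟩ := core (φ + 2*Real.pi) hc1 hc2
        rw [hGbarPer φ] at hle'
        exact ⟨ψ, hmem, hle'⟩
    · rcases lt_or_ge φ (((L:ℝ)-1)*c + φB) with hB2 | hB3
      · exact core φ hB1 hB2
      · refine ⟨φ - 2*Real.pi, ⟨?_, ?_⟩, ?_⟩
        · rw [hL1c] at hB3
          linarith
        · have h3 : φ - 2*Real.pi < 0 := by linarith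
          linarith [hφBL0c, hφB0]
        · have h4 := hGbarPer (φ - 2*Real.pi)
          rw [sub_add_cancel] at h4
          rw [h4]
  -- Final assembly
  have hEq1 : -(2 * Real.pi) / (L:ℝ) + φB = φB - c := by rw [hc]; ring
  have hEq2 : (L0:ℝ) * (2 * Real.pi) / (L:ℝ) - φB = (L0:ℝ)*c - φB := by rw [hc]; ring
  rw [hEq1, hEq2]
  have hIccNe : (Set.Icc (φB - c) ((L0:ℝ)*c - φB)).Nonempty := by
    refine ⟨φB - c, le_refl _, ?_⟩
    linarith [hφBL0c]
  have hIcoNe : (Set.Ico (0:ℝ) (2*Real.pi)).Nonempty := ⟨0, le_refl _, by linarith⟩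
  have hbddIco : BddBelow (Gbar L0 '' Set.Ico (0:ℝ) (2*Real.pi)) := by
    refine ⟨0, ?_⟩
    rintro v ⟨x, _, rfl⟩
    exact hGbarNN x
  have hbddIcc : BddBelow (Gbar L0 '' Set.Icc (φB - c) ((L0:ℝ)*c - φB)) := by
    refine ⟨0, ?_⟩
    rintro v ⟨x, _, rfl⟩
    exact hGbarNN x
  apply le_antisymm
  · -- sInf over [0,2π) ≤ sInf over I₀
    apply le_csInf (hIccNe.image _)
    rintro v ⟨ψ, hψ, rfl⟩
    have hub : ψ ≤ (L0:ℝ)*c - φB := hψ.2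
    have hlb : φB - c ≤ ψ := hψ.1
    have hL0c2π : (L0:ℝ)*c - φB < 2*Real.pi := by
      have h3 : (L0:ℝ)*c ≤ ((L:ℝ)-1)*c := mul_le_mul_of_nonneg_right hL0L1 hcpos.le
      rw [hL1c] at h3
      linarith
    rcases le_or_gt 0 ψ with hψ0 | hψneg
    · exact csInf_le hbddIco ⟨ψ, ⟨hψ0, by linarith⟩, rfl⟩
    · have hval : Gbar L0 (ψ + 2*Real.pi) = Gbar L0 ψ := hGbarPer ψ
      refine csInf_le hbddIco ⟨ψ + 2*Real.pi, ⟨?_, by linarith⟩, hval⟩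
      have hcle : c ≤ 2*Real.pi := by
        rw [hc, div_le_iff₀ hLR]
        have h5 : (1:ℝ) ≤ L := by exact_mod_cast (by omega : 1 ≤ L)
        nlinarith [h5, hπ]
      linarith
  · -- sInf over I₀ ≤ sInf over [0,2π)
    apply le_csInf (hIcoNe.image _)
    rintro v ⟨φ, hφ, rfl⟩
    obtain ⟨ψ, hmem, hle'⟩ := key φ hφ.1 hφ.2
    exact le_trans (csInf_le hbddIcc (Set.mem_image_of_mem _ hmem)) hle'
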